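/- arXiv:2304.08489 — 4 statements merged into one kernel-verified Lean document; each statement's English description precedes it below -/
import Mathlib

section
/- Let (Ω, 𝔽, P) be a probability space, Λ > 0, N : Ω → ℕ a Poisson random variable with parameter Λ, and (X_k)_{k∈ℕ} an i.i.d. sequence with values in a measurable space E and common distribution μ, independent of N. For bounded measurable f₁, f₂, f₃ : E → ℝ set S_i = Σ_{k=0}^{N−1} f_i(X_k). Then E[S₁S₂S₃] = Λ ∫ f₁f₂f₃ dμ + Λ² (∫ f₁f₂ dμ · ∫ f₃ dμ + ∫ f₁f₃ dμ · ∫ f₂ dμ + ∫ f₂f₃ dμ · ∫ f₁ dμ) + Λ³ (∫ f₁ dμ)(∫ f₂ dμ)(∫ f₃ dμ). -/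
open MeasureTheory ProbabilityTheory
open scoped NNReal

open Real
open scoped ENNReal


lemma fenrir_pois_hs1 (r : ℝ≥0) :
    HasSum (fun n : ℕ => poissonPMFReal r n * n) r := by
  have key : ∀ m : ℕ, poissonPMFReal r (m + 1) * ((m + 1 : ℕ) : ℝ)
      = (r : ℝ) * poissonPMFReal r m := by
    intro m
    unfold poissonPMFReal
    rw [Nat.factorial_succ]
    have h1 : ((m.factorial : ℝ)) ≠ 0 := Nat.cast_ne_zero.mpr m.factorial_ne_zero
    have h2 : ((m : ℝ) + 1) ≠ 0 := by positivity
    push_cast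
    field_simp
    ring
  have h0 := (poissonPMFRealSum r).mul_left (r : ℝ)
  rw [mul_one] at h0
  have h : HasSum (fun m : ℕ => poissonPMFReal r (m + 1) * ((m + 1 : ℕ) : ℝ)) (r : ℝ) := by
    simp only [key]; exact h0
  have := (hasSum_nat_add_iff (f := fun n : ℕ => poissonPMFReal r n * n) 1).mp h
  simpa using this

lemma fenrir_pois_hs2 (r : ℝ≥0) :
    HasSum (fun n : ℕ => poissonPMFReal r n * ((n : ℝ) * ((n : ℝ) - 1))) ((r : ℝ) ^ 2) := by
  have key : ∀ m : ℕ, poissonPMFReal r (m + 2) * (((m + 2 : ℕ) : ℝ) * (((m + 2 : ℕ) : ℝ) - 1))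
      = (r : ℝ) ^ 2 * poissonPMFReal r m := by
    intro m
    unfold poissonPMFReal
    have hfac : ((m + 2).factorial : ℝ) = ((m : ℝ) + 2) * (((m : ℝ) + 1) * m.factorial) := by
      rw [Nat.factorial_succ, Nat.factorial_succ]; push_cast; ring
    have h1 : ((m.factorial : ℝ)) ≠ 0 := Nat.cast_ne_zero.mpr m.factorial_ne_zero
    have h2 : ((m : ℝ) + 1) ≠ 0 := by positivity
    have h3 : ((m : ℝ) + 2) ≠ 0 := by positivity
    rw [hfac]
    push_cast
    field_simp
    ring
  have h0 := (poissonPMFRealSum r).mul_left ((r : ℝ) ^ 2)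
  rw [mul_one] at h0
  have h : HasSum (fun m : ℕ =>
      poissonPMFReal r (m + 2) * (((m + 2 : ℕ) : ℝ) * (((m + 2 : ℕ) : ℝ) - 1))) ((r : ℝ) ^ 2) := by
    simp only [key]; exact h0
  have := (hasSum_nat_add_iff
    (f := fun n : ℕ => poissonPMFReal r n * ((n : ℝ) * ((n : ℝ) - 1))) 2).mp h
  simpa [Finset.sum_range_succ] using this

lemma fenrir_pois_hs3 (r : ℝ≥0) :
    HasSum (fun n : ℕ => poissonPMFReal r n * ((n : ℝ) * ((n : ℝ) - 1) * ((n : ℝ) - 2)))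
      ((r : ℝ) ^ 3) := by
  have key : ∀ m : ℕ, poissonPMFReal r (m + 3) *
      (((m + 3 : ℕ) : ℝ) * (((m + 3 : ℕ) : ℝ) - 1) * (((m + 3 : ℕ) : ℝ) - 2))
      = (r : ℝ) ^ 3 * poissonPMFReal r m := by
    intro m
    unfold poissonPMFReal
    have hfac : ((m + 3).factorial : ℝ)
        = ((m : ℝ) + 3) * (((m : ℝ) + 2) * (((m : ℝ) + 1) * m.factorial)) := by
      rw [Nat.factorial_succ, Nat.factorial_succ, Nat.factorial_succ]; push_cast; ring
    have h1 : ((m.factorial : ℝ)) ≠ 0 := Nat.cast_ne_zero.mpr m.factorial_ne_zero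
    have h2 : ((m : ℝ) + 1) ≠ 0 := by positivity
    have h3 : ((m : ℝ) + 2) ≠ 0 := by positivity
    have h4 : ((m : ℝ) + 3) ≠ 0 := by positivity
    rw [hfac]
    push_cast
    field_simp
    ring
  have h0 := (poissonPMFRealSum r).mul_left ((r : ℝ) ^ 3)
  rw [mul_one] at h0
  have h : HasSum (fun m : ℕ => poissonPMFReal r (m + 3) *
      (((m + 3 : ℕ) : ℝ) * (((m + 3 : ℕ) : ℝ) - 1) * (((m + 3 : ℕ) : ℝ) - 2))) ((r : ℝ) ^ 3) := by
    simp only [key]; exact h0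
  have := (hasSum_nat_add_iff
    (f := fun n : ℕ => poissonPMFReal r n * ((n : ℝ) * ((n : ℝ) - 1) * ((n : ℝ) - 2))) 3).mp h
  simpa [Finset.sum_range_succ] using this

lemma fenrir_integrable_pmf {q : PMF ℕ} {φ : ℕ → ℝ}
    (h : Summable fun n => (q n).toReal * |φ n|) : Integrable φ q.toMeasure := by
  refine ⟨Measurable.aestronglyMeasurable (measurable_from_top), ?_⟩
  rw [HasFiniteIntegral, lintegral_countable']
  have heq : ∀ n : ℕ, ‖φ n‖ₑ * q.toMeasure {n}
      = ENNReal.ofReal ((q n).toReal * |φ n|) := by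
    intro n
    calc ‖φ n‖ₑ * q.toMeasure {n}
        = ENNReal.ofReal |φ n| * ENNReal.ofReal (q n).toReal := by
          rw [PMF.toMeasure_apply_singleton _ _ (measurableSet_singleton n),
            ENNReal.ofReal_toReal (q.apply_ne_top n), Real.enorm_eq_ofReal_abs]
      _ = ENNReal.ofReal (|φ n| * (q n).toReal) := (ENNReal.ofReal_mul (abs_nonneg _)).symm
      _ = ENNReal.ofReal ((q n).toReal * |φ n|) := by rw [mul_comm]
  rw [tsum_congr heq, ← ENNReal.ofReal_tsum_of_nonneg
    (fun n => mul_nonneg ENNReal.toReal_nonneg (abs_nonneg _)) h]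
  exact ENNReal.ofReal_lt_top

lemma fenrir_cube_sum (n : ℕ) (α c₁ c₂ c₃ c₄ : ℝ) :
    ∑ k ∈ Finset.range n, ∑ l ∈ Finset.range n, ∑ m ∈ Finset.range n,
      (α + (if k = l then c₁ else 0) + (if k = m then c₂ else 0) + (if l = m then c₃ else 0)
        + (if k = l ∧ l = m then c₄ else 0))
    = (n : ℝ) ^ 3 * α + (n : ℝ) ^ 2 * (c₁ + c₂ + c₃) + (n : ℝ) * c₄ := by
  have h1 : ∀ k l : ℕ, k ∈ Finset.range n → l ∈ Finset.range n →
      ∑ m ∈ Finset.range n, (α + (if k = l then c₁ else 0) + (if k = m then c₂ else 0)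
        + (if l = m then c₃ else 0) + (if k = l ∧ l = m then c₄ else 0))
      = (n : ℝ) * α + (n : ℝ) * (if k = l then c₁ else 0) + c₂ + c₃
        + (if k = l then c₄ else 0) := by
    intro k l hk hl
    simp only [Finset.sum_add_distrib, Finset.sum_const, Finset.card_range, nsmul_eq_mul]
    rw [Finset.sum_ite_eq (Finset.range n) k (fun _ => c₂),
      Finset.sum_ite_eq (Finset.range n) l (fun _ => c₃)]
    have h4 : ∑ m ∈ Finset.range n, (if k = l ∧ l = m then c₄ else 0)
        = if k = l then c₄ else 0 := by
      by_cases hkl : k = l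
      · simp only [hkl, true_and]
        rw [Finset.sum_ite_eq (Finset.range n) l (fun _ => c₄)]
        simp [hl]
      · simp [hkl]
    rw [h4]
    simp [hk, hl]
  rw [Finset.sum_congr rfl (fun k hk => Finset.sum_congr rfl (fun l hl => h1 k l hk hl))]
  have h2 : ∀ k : ℕ, k ∈ Finset.range n →
      ∑ l ∈ Finset.range n, (if k = l then c₁ else 0) = c₁ := by
    intro k hk
    rw [Finset.sum_ite_eq (Finset.range n) k (fun _ => c₁)]
    simp [hk]
  have h3 : ∀ k : ℕ, k ∈ Finset.range n →
      ∑ l ∈ Finset.range n, (if k = l then c₄ else 0) = c₄ := by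
    intro k hk
    rw [Finset.sum_ite_eq (Finset.range n) k (fun _ => c₄)]
    simp [hk]
  have h5 : ∀ k : ℕ, k ∈ Finset.range n →
      ∑ l ∈ Finset.range n, ((n : ℝ) * α + (n : ℝ) * (if k = l then c₁ else 0) + c₂ + c₃
        + (if k = l then c₄ else 0))
      = (n : ℝ) * ((n : ℝ) * α) + (n : ℝ) * c₁ + (n : ℝ) * c₂ + (n : ℝ) * c₃ + c₄ := by
    intro k hk
    simp only [Finset.sum_add_distrib, Finset.sum_const, Finset.card_range, nsmul_eq_mul]
    rw [← Finset.mul_sum, h2 k hk, h3 k hk]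
  rw [Finset.sum_congr rfl h5]
  simp only [Finset.sum_const, Finset.card_range, nsmul_eq_mul]
  ring


/-- Third-moment identity for Poissonized random sums:
if `N` is Poisson with parameter `Λ > 0` and `(X k)` is i.i.d. with common distribution `μ`,
the whole sequence independent of `N`, then for bounded measurable `f₁, f₂, f₃`, setting
`Sᵢ = ∑_{k<N} fᵢ (X k)`,
`E[S₁ S₂ S₃] = Λ ∫ f₁ f₂ f₃ dμ
  + Λ² (∫ f₁ f₂ dμ ∫ f₃ dμ + ∫ f₁ f₃ dμ ∫ f₂ dμ + ∫ f₂ f₃ dμ ∫ f₁ dμ)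
  + Λ³ (∫ f₁ dμ)(∫ f₂ dμ)(∫ f₃ dμ)`. -/
theorem fenrir_poisson_sum_third_moment
    {Ω : Type*} [MeasurableSpace Ω] (P : Measure Ω) [IsProbabilityMeasure P]
    {E : Type*} [MeasurableSpace E]
    (Λ : ℝ≥0) (hΛ : 0 < Λ)
    (N : Ω → ℕ) (hN : Measurable N)
    (hNdist : Measure.map N P = poissonMeasure Λ)
    (X : ℕ → Ω → E) (hXmeas : ∀ k, Measurable (X k))
    (μ : Measure E) [IsProbabilityMeasure μ]
    (hXdist : ∀ k, Measure.map (X k) P = μ)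
    (hXindep : iIndepFun X P)
    (hNX : IndepFun N (fun ω k => X k ω) P)
    (f₁ f₂ f₃ : E → ℝ)
    (hf₁meas : Measurable f₁) (hf₂meas : Measurable f₂) (hf₃meas : Measurable f₃)
    (hf₁bdd : ∃ C, ∀ x, |f₁ x| ≤ C) (hf₂bdd : ∃ C, ∀ x, |f₂ x| ≤ C)
    (hf₃bdd : ∃ C, ∀ x, |f₃ x| ≤ C) :
    ∫ ω, (∑ k ∈ Finset.range (N ω), f₁ (X k ω)) * (∑ k ∈ Finset.range (N ω), f₂ (X k ω)) *
        (∑ k ∈ Finset.range (N ω), f₃ (X k ω)) ∂P =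
      (Λ : ℝ) * ∫ x, f₁ x * f₂ x * f₃ x ∂μ +
        (Λ : ℝ) ^ 2 * ((∫ x, f₁ x * f₂ x ∂μ) * (∫ x, f₃ x ∂μ) +
          (∫ x, f₁ x * f₃ x ∂μ) * (∫ x, f₂ x ∂μ) +
          (∫ x, f₂ x * f₃ x ∂μ) * (∫ x, f₁ x ∂μ)) +
        (Λ : ℝ) ^ 3 * (∫ x, f₁ x ∂μ) * (∫ x, f₂ x ∂μ) * (∫ x, f₃ x ∂μ) := by
  classical
  obtain ⟨C₁, hC₁⟩ := hf₁bdd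
  obtain ⟨C₂, hC₂⟩ := hf₂bdd
  obtain ⟨C₃, hC₃⟩ := hf₃bdd
  set D₁ : ℝ := max C₁ 0 with hD₁def
  set D₂ : ℝ := max C₂ 0 with hD₂def
  set D₃ : ℝ := max C₃ 0 with hD₃def
  have hD₁ : ∀ x, |f₁ x| ≤ D₁ := fun x => le_trans (hC₁ x) (le_max_left _ _)
  have hD₂ : ∀ x, |f₂ x| ≤ D₂ := fun x => le_trans (hC₂ x) (le_max_left _ _)
  have hD₃ : ∀ x, |f₃ x| ≤ D₃ := fun x => le_trans (hC₃ x) (le_max_left _ _)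
  have hD₁0 : 0 ≤ D₁ := le_max_right _ _
  have hD₂0 : 0 ≤ D₂ := le_max_right _ _
  have hD₃0 : 0 ≤ D₃ := le_max_right _ _
  set m1 : ℝ := ∫ x, f₁ x ∂μ with hm1
  set m2 : ℝ := ∫ x, f₂ x ∂μ with hm2
  set m3 : ℝ := ∫ x, f₃ x ∂μ with hm3
  set a : ℝ := ∫ x, f₁ x * f₂ x * f₃ x ∂μ with ha
  set b12 : ℝ := ∫ x, f₁ x * f₂ x ∂μ with hb12
  set b13 : ℝ := ∫ x, f₁ x * f₃ x ∂μ with hb13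
  set b23 : ℝ := ∫ x, f₂ x * f₃ x ∂μ with hb23
  set T : ℕ → Ω → ℝ := fun n ω => (∑ k ∈ Finset.range n, f₁ (X k ω)) *
    (∑ k ∈ Finset.range n, f₂ (X k ω)) * (∑ k ∈ Finset.range n, f₃ (X k ω)) with hTdef
  -- measurability of the partial sums and T
  have hS₁meas : ∀ n, Measurable fun ω => ∑ k ∈ Finset.range n, f₁ (X k ω) :=
    fun n => Finset.measurable_sum _ fun k _ => hf₁meas.comp (hXmeas k)
  have hS₂meas : ∀ n, Measurable fun ω => ∑ k ∈ Finset.range n, f₂ (X k ω) :=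
    fun n => Finset.measurable_sum _ fun k _ => hf₂meas.comp (hXmeas k)
  have hS₃meas : ∀ n, Measurable fun ω => ∑ k ∈ Finset.range n, f₃ (X k ω) :=
    fun n => Finset.measurable_sum _ fun k _ => hf₃meas.comp (hXmeas k)
  have hTmeas : ∀ n, Measurable (T n) := fun n =>
    ((hS₁meas n).mul (hS₂meas n)).mul (hS₃meas n)
  have hgmeas : Measurable fun ω => T (N ω) ω := by
    have h : Measurable fun p : Ω × ℕ => T p.2 p.1 :=
      measurable_from_prod_countable_left fun n => hTmeas n
    exact h.comp (measurable_id.prodMk hN)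
  -- pointwise bounds
  have hSbd₁ : ∀ n ω, |∑ k ∈ Finset.range n, f₁ (X k ω)| ≤ (n : ℝ) * D₁ := by
    intro n ω
    calc |∑ k ∈ Finset.range n, f₁ (X k ω)| ≤ ∑ k ∈ Finset.range n, |f₁ (X k ω)| :=
          Finset.abs_sum_le_sum_abs _ _
      _ ≤ ∑ k ∈ Finset.range n, D₁ := Finset.sum_le_sum fun k _ => hD₁ _
      _ = (n : ℝ) * D₁ := by simp [mul_comm]
  have hSbd₂ : ∀ n ω, |∑ k ∈ Finset.range n, f₂ (X k ω)| ≤ (n : ℝ) * D₂ := by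
    intro n ω
    calc |∑ k ∈ Finset.range n, f₂ (X k ω)| ≤ ∑ k ∈ Finset.range n, |f₂ (X k ω)| :=
          Finset.abs_sum_le_sum_abs _ _
      _ ≤ ∑ k ∈ Finset.range n, D₂ := Finset.sum_le_sum fun k _ => hD₂ _
      _ = (n : ℝ) * D₂ := by simp [mul_comm]
  have hSbd₃ : ∀ n ω, |∑ k ∈ Finset.range n, f₃ (X k ω)| ≤ (n : ℝ) * D₃ := by
    intro n ω
    calc |∑ k ∈ Finset.range n, f₃ (X k ω)| ≤ ∑ k ∈ Finset.range n, |f₃ (X k ω)| :=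
          Finset.abs_sum_le_sum_abs _ _
      _ ≤ ∑ k ∈ Finset.range n, D₃ := Finset.sum_le_sum fun k _ => hD₃ _
      _ = (n : ℝ) * D₃ := by simp [mul_comm]
  have hTbd : ∀ n ω, |T n ω| ≤ D₁ * D₂ * D₃ * (n : ℝ) ^ 3 := by
    intro n ω
    have h12 : |(∑ k ∈ Finset.range n, f₁ (X k ω)) * (∑ k ∈ Finset.range n, f₂ (X k ω))|
        ≤ ((n : ℝ) * D₁) * ((n : ℝ) * D₂) := by
      rw [abs_mul]
      exact mul_le_mul (hSbd₁ n ω) (hSbd₂ n ω) (abs_nonneg _) (by positivity)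
    calc |T n ω| = |(∑ k ∈ Finset.range n, f₁ (X k ω)) * (∑ k ∈ Finset.range n, f₂ (X k ω))| *
          |∑ k ∈ Finset.range n, f₃ (X k ω)| := by rw [hTdef]; rw [abs_mul]
      _ ≤ (((n : ℝ) * D₁) * ((n : ℝ) * D₂)) * ((n : ℝ) * D₃) :=
          mul_le_mul h12 (hSbd₃ n ω) (abs_nonneg _) (by positivity)
      _ = D₁ * D₂ * D₃ * (n : ℝ) ^ 3 := by ring
  -- integrability of the global bound
  have hcube : HasSum (fun n : ℕ => poissonPMFReal Λ n * (n : ℝ) ^ 3)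
      ((Λ : ℝ) ^ 3 + (3 * (Λ : ℝ) ^ 2 + (Λ : ℝ))) := by
    have h := (fenrir_pois_hs3 Λ).add (((fenrir_pois_hs2 Λ).mul_left 3).add (fenrir_pois_hs1 Λ))
    have heq : (fun n : ℕ => poissonPMFReal Λ n * ((n : ℝ) * ((n : ℝ) - 1) * ((n : ℝ) - 2)) +
        (3 * (poissonPMFReal Λ n * ((n : ℝ) * ((n : ℝ) - 1))) + poissonPMFReal Λ n * (n : ℝ)))
        = fun n : ℕ => poissonPMFReal Λ n * (n : ℝ) ^ 3 := funext fun n => by ring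
    rwa [heq] at h
  have hpmfreal : ∀ n : ℕ, (poissonPMF Λ n).toReal = poissonPMFReal Λ n := by
    intro n
    show (ENNReal.ofReal (poissonPMFReal Λ n)).toReal = _
    exact ENNReal.toReal_ofReal poissonPMFReal_nonneg
  have hintpois : Integrable (fun n : ℕ => (n : ℝ) ^ 3) (poissonMeasure Λ) := by
    refine integrable_poissonMeasure_iff.mpr ?_
    refine hcube.summable.congr fun n => ?_
    rw [Real.norm_eq_abs, abs_of_nonneg (by positivity)]; rfl
  have hintN : Integrable (fun ω => (N ω : ℝ) ^ 3) P := by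
    rw [← hNdist] at hintpois
    exact (integrable_map_measure (measurable_from_top.aestronglyMeasurable) hN.aemeasurable).mp
      hintpois
  have hgint : Integrable (fun ω => T (N ω) ω) P := by
    refine Integrable.mono' (hintN.const_mul (D₁ * D₂ * D₃)) hgmeas.aestronglyMeasurable ?_
    filter_upwards with ω
    simpa [Real.norm_eq_abs] using hTbd (N ω) ω
  -- single / pair / triple expectations
  have hone : ∀ (u : E → ℝ), Measurable u → ∀ k, ∫ ω, u (X k ω) ∂P = ∫ x, u x ∂μ := by
    intro u hu k
    rw [← hXdist k, integral_map (hXmeas k).aemeasurable]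
    exact hu.aestronglyMeasurable
  have hpair : ∀ (u v : E → ℝ), Measurable u → Measurable v → ∀ k l, k ≠ l →
      ∫ ω, u (X k ω) * v (X l ω) ∂P = (∫ x, u x ∂μ) * (∫ x, v x ∂μ) := by
    intro u v hu hv k l hkl
    have hind : IndepFun (u ∘ X k) (v ∘ X l) P :=
      (hXindep.indepFun hkl).comp hu hv
    have h := hind.integral_fun_mul_eq_mul_integral ((hu.comp (hXmeas k)).aestronglyMeasurable)
      ((hv.comp (hXmeas l)).aestronglyMeasurable)
    simp only [Function.comp_apply] at h
    rw [h, show ∫ x, u (X k x) ∂P = ∫ x, u x ∂μ from hone u hu k,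
      show ∫ x, v (X l x) ∂P = ∫ x, v x ∂μ from hone v hv l]
  have htriple : ∀ k l m : ℕ, k ≠ l → k ≠ m → l ≠ m →
      ∫ ω, f₁ (X k ω) * f₂ (X l ω) * f₃ (X m ω) ∂P = m1 * m2 * m3 := by
    intro k l m hkl hkm hlm
    have hpm : Measurable fun p : E × E => f₁ p.1 * f₂ p.2 :=
      (hf₁meas.comp measurable_fst).mul (hf₂meas.comp measurable_snd)
    have hind := (hXindep.indepFun_prodMk hXmeas k l m hkm hlm).comp hpm hf₃meas
    have h := hind.integral_fun_mul_eq_mul_integral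
      ((hpm.comp (((hXmeas k).prodMk (hXmeas l)))).aestronglyMeasurable)
      ((hf₃meas.comp (hXmeas m)).aestronglyMeasurable)
    simp only [Function.comp_apply] at h
    rw [h, hm1, hm2, hm3,
      show ∫ x, f₁ (X k x) * f₂ (X l x) ∂P
        = (∫ x, f₁ x ∂μ) * ∫ x, f₂ x ∂μ from hpair f₁ f₂ hf₁meas hf₂meas k l hkl,
      show ∫ x, f₃ (X m x) ∂P = ∫ x, f₃ x ∂μ from hone f₃ hf₃meas m]
  -- each term integrable
  have htermint : ∀ k l m : ℕ,
      Integrable (fun ω => f₁ (X k ω) * f₂ (X l ω) * f₃ (X m ω)) P := by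
    intro k l m
    refine Integrable.mono' (integrable_const (D₁ * D₂ * D₃))
      ((((hf₁meas.comp (hXmeas k)).mul (hf₂meas.comp (hXmeas l))).mul
        (hf₃meas.comp (hXmeas m))).aestronglyMeasurable) ?_
    filter_upwards with ω
    rw [Real.norm_eq_abs, abs_mul, abs_mul]
    exact mul_le_mul (mul_le_mul (hD₁ _) (hD₂ _) (abs_nonneg _) hD₁0)
      (hD₃ _) (abs_nonneg _) (by positivity)
  -- expectation of T n
  have hTn : ∀ n : ℕ, ∫ ω, T n ω ∂P
      = (n : ℝ) ^ 3 * (m1 * m2 * m3)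
        + (n : ℝ) ^ 2 * ((b12 * m3 - m1 * m2 * m3) + (b13 * m2 - m1 * m2 * m3)
          + (b23 * m1 - m1 * m2 * m3))
        + (n : ℝ) * (a - b12 * m3 - b13 * m2 - b23 * m1 + 2 * (m1 * m2 * m3)) := by
    intro n
    have hexp : ∀ ω, T n ω = ∑ k ∈ Finset.range n, ∑ l ∈ Finset.range n, ∑ m ∈ Finset.range n,
        f₁ (X k ω) * f₂ (X l ω) * f₃ (X m ω) := by
      intro ω
      rw [hTdef]
      simp only []
      rw [Finset.sum_mul_sum, Finset.sum_mul]
      exact Finset.sum_congr rfl fun k _ => by rw [Finset.sum_mul_sum]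
    have step1 : ∫ ω, T n ω ∂P = ∑ k ∈ Finset.range n, ∑ l ∈ Finset.range n,
        ∑ m ∈ Finset.range n, ∫ ω, f₁ (X k ω) * f₂ (X l ω) * f₃ (X m ω) ∂P := by
      rw [integral_congr_ae (Filter.Eventually.of_forall hexp)]
      rw [integral_finset_sum _ fun k _ => integrable_finset_sum _ fun l _ =>
        integrable_finset_sum _ fun m _ => htermint k l m]
      refine Finset.sum_congr rfl fun k _ => ?_
      rw [integral_finset_sum _ fun l _ => integrable_finset_sum _ fun m _ => htermint k l m]
      exact Finset.sum_congr rfl fun l _ =>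
        integral_finset_sum _ fun m _ => htermint k l m
    rw [step1]
    have step2 : ∀ k l m : ℕ, ∫ ω, f₁ (X k ω) * f₂ (X l ω) * f₃ (X m ω) ∂P
        = m1 * m2 * m3 + (if k = l then b12 * m3 - m1 * m2 * m3 else 0)
          + (if k = m then b13 * m2 - m1 * m2 * m3 else 0)
          + (if l = m then b23 * m1 - m1 * m2 * m3 else 0)
          + (if k = l ∧ l = m then a - b12 * m3 - b13 * m2 - b23 * m1 + 2 * (m1 * m2 * m3)
              else 0) := by
      intro k l m
      by_cases hkl : k = l
      · subst hkl
        by_cases hlm : k = m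
        · subst hlm
          have h := hone (fun x => f₁ x * f₂ x * f₃ x) ((hf₁meas.mul hf₂meas).mul hf₃meas) k
          rw [h, ← ha]
          simp only [if_pos rfl, and_self, if_true, true_and]
          ring
        · have h := hpair (fun x => f₁ x * f₂ x) f₃ (hf₁meas.mul hf₂meas) hf₃meas k m hlm
          rw [h, ← hb12, ← hm3]
          simp only [if_pos rfl, hlm, if_neg hlm, and_self, if_false, if_true, true_and,
            false_and, and_false]
          ring
      · by_cases hkm : k = m
        · subst hkm
          rw [show (fun ω => f₁ (X k ω) * f₂ (X l ω) * f₃ (X k ω))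
              = fun ω => f₁ (X k ω) * f₃ (X k ω) * f₂ (X l ω) from funext fun ω => by ring]
          have h := hpair (fun x => f₁ x * f₃ x) f₂ (hf₁meas.mul hf₃meas) hf₂meas k l hkl
          rw [h, ← hb13, ← hm2]
          have hlk : ¬ l = k := fun hh => hkl hh.symm
          simp only [hkl, if_neg hkl, if_pos rfl, hlk, if_neg hlk, false_and, if_false, if_true]
          ring
        · by_cases hlm : l = m
          · subst hlm
            rw [show (fun ω => f₁ (X k ω) * f₂ (X l ω) * f₃ (X l ω))
                = fun ω => f₁ (X k ω) * (f₂ (X l ω) * f₃ (X l ω)) from funext fun ω => by ring]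
            have h := hpair f₁ (fun x => f₂ x * f₃ x) hf₁meas (hf₂meas.mul hf₃meas) k l hkl
            rw [h, ← hb23, ← hm1]
            simp only [hkl, if_neg hkl, if_pos rfl, false_and, if_false, if_true]
            ring
          · rw [htriple k l m hkl hkm hlm]
            simp only [hkl, hkm, hlm, if_neg hkl, if_neg hkm, if_neg hlm, false_and, if_false]
            ring
    rw [Finset.sum_congr rfl fun k _ => Finset.sum_congr rfl fun l _ =>
      Finset.sum_congr rfl fun m _ => step2 k l m]
    exact fenrir_cube_sum n (m1 * m2 * m3) (b12 * m3 - m1 * m2 * m3) (b13 * m2 - m1 * m2 * m3)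
      (b23 * m1 - m1 * m2 * m3) (a - b12 * m3 - b13 * m2 - b23 * m1 + 2 * (m1 * m2 * m3))
  -- conditioning on N
  have hterm : ∀ n : ℕ, ∫ ω in N ⁻¹' {n}, T (N ω) ω ∂P
      = poissonPMFReal Λ n * ∫ ω, T n ω ∂P := by
    intro n
    have hφ : Measurable (Set.indicator ({n} : Set ℕ) fun _ => (1 : ℝ)) :=
      measurable_const.indicator (measurableSet_singleton n)
    have hψ : Measurable fun x : ℕ → E => (∑ k ∈ Finset.range n, f₁ (x k)) *
        (∑ k ∈ Finset.range n, f₂ (x k)) * (∑ k ∈ Finset.range n, f₃ (x k)) :=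
      ((Finset.measurable_sum _ fun k _ => hf₁meas.comp (measurable_pi_apply k)).mul
        (Finset.measurable_sum _ fun k _ => hf₂meas.comp (measurable_pi_apply k))).mul
        (Finset.measurable_sum _ fun k _ => hf₃meas.comp (measurable_pi_apply k))
    have hYmeas : Measurable fun ω (k : ℕ) => X k ω := measurable_pi_lambda _ hXmeas
    have h := ((hNX.comp hφ hψ).integral_fun_mul_eq_mul_integral ((hφ.comp hN).aestronglyMeasurable)
      ((hψ.comp hYmeas).aestronglyMeasurable))
    simp only [Function.comp_apply] at h
    have hind_eq : (Set.indicator (N ⁻¹' {n}) fun ω => T (N ω) ω)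
        = fun ω => Set.indicator ({n} : Set ℕ) (fun _ => (1 : ℝ)) (N ω) *
            ((∑ k ∈ Finset.range n, f₁ (X k ω)) * (∑ k ∈ Finset.range n, f₂ (X k ω)) *
              (∑ k ∈ Finset.range n, f₃ (X k ω))) := by
      funext ω
      by_cases hω : N ω = n
      · simp [Set.indicator_apply, hω, hTdef]
      · simp [Set.indicator_apply, hω]
    rw [← integral_indicator (hN (measurableSet_singleton n)), hind_eq, h]
    have hφN : integral P ((Set.indicator ({n} : Set ℕ) fun _ => (1 : ℝ)) ∘ N)
        = poissonPMFReal Λ n := by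
      have h1 : integral P ((Set.indicator ({n} : Set ℕ) fun _ => (1 : ℝ)) ∘ N)
          = ∫ y, Set.indicator ({n} : Set ℕ) (fun _ => (1 : ℝ)) y ∂(poissonMeasure Λ) := by
        rw [← hNdist]
        exact (integral_map hN.aemeasurable hφ.aestronglyMeasurable).symm
      rw [h1, integral_indicator (measurableSet_singleton n), setIntegral_const, smul_eq_mul,
        mul_one]
      rw [poissonMeasure_real_singleton]; rfl
    have hψY : integral P ((fun x : ℕ → E => (∑ k ∈ Finset.range n, f₁ (x k)) *
        (∑ k ∈ Finset.range n, f₂ (x k)) * (∑ k ∈ Finset.range n, f₃ (x k)))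
          ∘ fun ω (k : ℕ) => X k ω) = ∫ ω, T n ω ∂P := rfl
    exact congrArg₂ (· * ·) hφN hψY
  -- sum over the partition {N = n}
  have hUnion : (⋃ n : ℕ, N ⁻¹' {n}) = Set.univ := by
    ext ω; simp
  have hdisj : Pairwise (Function.onFun Disjoint fun n : ℕ => N ⁻¹' {n}) := by
    intro i j hij
    refine Set.disjoint_left.mpr fun ω h1 h2 => hij ?_
    simp only [Set.mem_preimage, Set.mem_singleton_iff] at h1 h2
    rw [← h1, ← h2]
  have hintU : IntegrableOn (fun ω => T (N ω) ω) (⋃ n : ℕ, N ⁻¹' {n}) P := by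
    rw [hUnion]
    exact integrableOn_univ.mpr hgint
  have hsumInt := hasSum_integral_iUnion (fun n : ℕ => hN (measurableSet_singleton n)) hdisj hintU
  rw [hUnion, Measure.restrict_univ] at hsumInt
  have hfin : HasSum (fun n : ℕ => ∫ ω in N ⁻¹' {n}, T (N ω) ω ∂P)
      ((Λ : ℝ) * a + (Λ : ℝ) ^ 2 * (b12 * m3 + b13 * m2 + b23 * m1)
        + (Λ : ℝ) ^ 3 * m1 * m2 * m3) := by
    have h1 := ((fenrir_pois_hs3 Λ).mul_left (m1 * m2 * m3)).add
      (((fenrir_pois_hs2 Λ).mul_left (b12 * m3 + b13 * m2 + b23 * m1)).add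
        ((fenrir_pois_hs1 Λ).mul_left a))
    have heq : (fun n : ℕ => m1 * m2 * m3 *
          (poissonPMFReal Λ n * ((n : ℝ) * ((n : ℝ) - 1) * ((n : ℝ) - 2)))
        + ((b12 * m3 + b13 * m2 + b23 * m1) * (poissonPMFReal Λ n * ((n : ℝ) * ((n : ℝ) - 1)))
          + a * (poissonPMFReal Λ n * (n : ℝ))))
        = fun n : ℕ => ∫ ω in N ⁻¹' {n}, T (N ω) ω ∂P := by
      funext n
      rw [hterm n, hTn n]
      ring
    rw [heq] at h1
    have e : (Λ : ℝ) * a + (Λ : ℝ) ^ 2 * (b12 * m3 + b13 * m2 + b23 * m1) + (Λ : ℝ) ^ 3 * m1 * m2 * m3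
        = m1 * m2 * m3 * (Λ : ℝ) ^ 3 + ((b12 * m3 + b13 * m2 + b23 * m1) * (Λ : ℝ) ^ 2 + a * (Λ : ℝ)) := by
      ring
    rw [e]; exact h1
  have hval := hsumInt.unique hfin
  have hgoal : (∫ ω, T (N ω) ω ∂P) = ∫ ω, (∑ k ∈ Finset.range (N ω), f₁ (X k ω)) *
      (∑ k ∈ Finset.range (N ω), f₂ (X k ω)) * (∑ k ∈ Finset.range (N ω), f₃ (X k ω)) ∂P := rfl
  rw [← hgoal, hval]
end

section
/- Let W : ℝ → ℝ be integrable and bounded, let i, j : ℝ → ℝ be continuous 2π-periodic functions, and let ω, τ ∈ ℝ. Then (1/2π) ∫₀^{2π} ∫_ℝ W(t) i(φ₀ + ωt) W(t + τ) j(φ₀ + ω(t + τ)) dt dφ₀ = (∫_ℝ W(t) W(t + τ) dt) · ((1/2π) ∫₀^{2π} i(φ) j(φ + ωτ) dφ). -/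
open MeasureTheory Real
open scoped Real

/-- Separation of the window and periodic components of the FENRIR kernel:
for an integrable bounded window `W` and continuous `2π`-periodic functions `i, j`,
averaging over a uniform initial longitude `φ₀ ∈ [0, 2π]` factorizes the autocovariance
into the window kernel times the periodic kernel. -/
theorem fenrir_window_periodic_separation
    (W : ℝ → ℝ) (hWint : Integrable W) (hWbdd : ∃ C, ∀ t, |W t| ≤ C)
    (i j : ℝ → ℝ) (hi : Continuous i) (hj : Continuous j)
    (hiper : Function.Periodic i (2 * π)) (hjper : Function.Periodic j (2 * π))
    (ω τ : ℝ) :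
    (1 / (2 * π)) * ∫ φ₀ in (0 : ℝ)..(2 * π),
        ∫ t : ℝ, W t * i (φ₀ + ω * t) * W (t + τ) * j (φ₀ + ω * (t + τ)) =
      (∫ t : ℝ, W t * W (t + τ)) *
        ((1 / (2 * π)) * ∫ φ in (0 : ℝ)..(2 * π), i φ * j (φ + ω * τ)) := by
  obtain ⟨Cw, hCw⟩ := hWbdd
  have h2pi : (0:ℝ) < 2 * π := by positivity
  obtain ⟨Mi, hMi⟩ := isBounded_iff_forall_norm_le.1
    (hiper.isBounded_of_continuous h2pi.ne' hi)
  obtain ⟨Mj, hMj⟩ := isBounded_iff_forall_norm_le.1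
    (hjper.isBounded_of_continuous h2pi.ne' hj)
  have hMi' : ∀ x, |i x| ≤ Mi := fun x => by
    simpa [Real.norm_eq_abs] using hMi _ ⟨x, rfl⟩
  have hMj' : ∀ x, |j x| ≤ Mj := fun x => by
    simpa [Real.norm_eq_abs] using hMj _ ⟨x, rfl⟩
  -- measurability of shifted window
  have hWτmeas : AEStronglyMeasurable (fun t => W (t + τ)) volume :=
    hWint.1.comp_quasiMeasurePreserving
      (measurePreserving_add_right volume τ).quasiMeasurePreserving
  set g : ℝ → ℝ := fun φ => i φ * j (φ + ω * τ) with hg_def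
  have hgper : Function.Periodic g (2 * π) := by
    intro x
    have h1 : x + 2 * π + ω * τ = (x + ω * τ) + 2 * π := by ring
    simp [hg_def, hiper x, h1, hjper (x + ω * τ)]
  set C := ∫ φ in (0:ℝ)..(2 * π), i φ * j (φ + ω * τ) with hC_def
  -- the inner φ₀-integral for fixed t
  have key : ∀ t : ℝ, (∫ φ₀ in Set.Ioc (0:ℝ) (2 * π),
      W t * i (φ₀ + ω * t) * W (t + τ) * j (φ₀ + ω * (t + τ))) = (W t * W (t + τ)) * C := by
    intro t
    rw [← intervalIntegral.integral_of_le h2pi.le]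
    have h1 : ∀ φ₀ : ℝ, W t * i (φ₀ + ω * t) * W (t + τ) * j (φ₀ + ω * (t + τ))
        = (W t * W (t + τ)) * g (φ₀ + ω * t) := by
      intro φ₀
      have : φ₀ + ω * (t + τ) = (φ₀ + ω * t) + ω * τ := by ring
      rw [this, hg_def]; ring
    simp only [h1]
    rw [intervalIntegral.integral_const_mul]
    congr 1
    rw [intervalIntegral.integral_comp_add_right (a := (0:ℝ)) (b := 2 * π) g (ω * t)]
    have h2 : (0:ℝ) + ω * t = ω * t := by ring
    have h3 : 2 * π + ω * t = ω * t + 2 * π := by ring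
    rw [h2, h3, hgper.intervalIntegral_add_eq (ω * t) 0, zero_add, hC_def]
  -- integrability on the product space
  have hInt : Integrable (Function.uncurry fun φ₀ t =>
      W t * i (φ₀ + ω * t) * W (t + τ) * j (φ₀ + ω * (t + τ)))
      ((volume.restrict (Set.Ioc (0:ℝ) (2 * π))).prod volume) := by
    have hdom : Integrable (fun p : ℝ × ℝ => (Mi * Cw * Mj) * |W p.2|)
        ((volume.restrict (Set.Ioc (0:ℝ) (2 * π))).prod volume) :=
      Integrable.mul_prod (integrable_const (Mi * Cw * Mj)) hWint.abs
    refine hdom.mono' ?_ ?_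
    · have hc1 : Continuous fun p : ℝ × ℝ => i (p.1 + ω * p.2) :=
        hi.comp (continuous_fst.add (continuous_const.mul continuous_snd))
      have hc2 : Continuous fun p : ℝ × ℝ => j (p.1 + ω * (p.2 + τ)) :=
        hj.comp (continuous_fst.add (continuous_const.mul (continuous_snd.add continuous_const)))
      exact ((hWint.1.comp_snd.mul hc1.aestronglyMeasurable).mul hWτmeas.comp_snd).mul
        hc2.aestronglyMeasurable
    · refine Filter.Eventually.of_forall fun p => ?_
      have hW0 : (0:ℝ) ≤ |W p.2| := abs_nonneg _
      have hi0 : (0:ℝ) ≤ |i (p.1 + ω * p.2)| := abs_nonneg _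
      have hj0 : (0:ℝ) ≤ |j (p.1 + ω * (p.2 + τ))| := abs_nonneg _
      have hWτ0 : (0:ℝ) ≤ |W (p.2 + τ)| := abs_nonneg _
      simp only [Function.uncurry, Real.norm_eq_abs, abs_mul]
      calc |W p.2| * |i (p.1 + ω * p.2)| * |W (p.2 + τ)| * |j (p.1 + ω * (p.2 + τ))|
          ≤ |W p.2| * Mi * Cw * Mj := by
            have hMi0 : (0:ℝ) ≤ Mi := (abs_nonneg _).trans (hMi' 0)
            have hMj0 : (0:ℝ) ≤ Mj := (abs_nonneg _).trans (hMj' 0)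
            have hCw0 : (0:ℝ) ≤ Cw := (abs_nonneg _).trans (hCw 0)
            gcongr <;> first
              | exact hMi' _ | exact hCw _ | exact hMj' _
        _ = Mi * Cw * Mj * |W p.2| := by ring
  -- now swap the integrals
  rw [intervalIntegral.integral_of_le h2pi.le,
    MeasureTheory.integral_integral_swap hInt]
  simp only [key]
  rw [MeasureTheory.integral_mul_const]
  ring
end

section
/- Let ρ₊, ρ₋ > 0 with ρ₊ ≠ ρ₋ and define W : ℝ → ℝ by W(t) = e^{t/ρ₋} for t < 0, W(t) = e^{−t/ρ₊} for t > 0, and W(0) = 1. Then for every τ ∈ ℝ, ∫_ℝ W(t) W(t + τ) dt = ((ρ₊ + ρ₋)/2) · (ρ₊ e^{−|τ|/ρ₊} − ρ₋ e^{−|τ|/ρ₋})/(ρ₊ − ρ₋). -/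
open MeasureTheory Real

open Set

lemma fenrirIntExpIoi {b : ℝ} (hb : 0 < b) (c : ℝ) :
    ∫ t in Ioi c, Real.exp (-(b * t)) = Real.exp (-(b * c)) / b := by
  have h := integral_comp_mul_left_Ioi (fun x => Real.exp (-x)) c hb
  simp only [smul_eq_mul] at h
  rw [h, integral_exp_neg_Ioi, inv_mul_eq_div]

lemma fenrirIntExpIic {b : ℝ} (hb : 0 < b) (c : ℝ) :
    ∫ t in Iic c, Real.exp (b * t) = Real.exp (b * c) / b := by
  have h := integral_comp_neg_Ioi (-c) (fun x => Real.exp (b * x))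
  rw [neg_neg] at h
  rw [← h]
  simp_rw [mul_neg]
  rw [fenrirIntExpIoi hb, mul_neg, neg_neg]

lemma fenrirIntOnIoi {b : ℝ} (hb : 0 < b) (c : ℝ) :
    IntegrableOn (fun t : ℝ => Real.exp (-(b * t))) (Ioi c) := by
  simpa [neg_mul] using exp_neg_integrableOn_Ioi c hb

lemma fenrirIntOnIic {b : ℝ} (hb : 0 < b) (c : ℝ) :
    IntegrableOn (fun t : ℝ => Real.exp (b * t)) (Iic c) := by
  have A : MeasurableEmbedding (fun x : ℝ => -x) :=
    (Homeomorph.neg ℝ).isClosedEmbedding.measurableEmbedding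
  have h := A.integrableOn_map_iff
    (f := fun t : ℝ => Real.exp (b * t)) (μ := (volume : Measure ℝ)) (s := Iic c)
  rw [Measure.map_neg_eq_self] at h
  rw [h]
  have hpre : ((fun x : ℝ => -x) ⁻¹' Iic c) = Ici (-c) := by
    ext x; simp [neg_le]
  rw [hpre, integrableOn_Ici_iff_integrableOn_Ioi]
  have := fenrirIntOnIoi hb (-c)
  simpa [Function.comp_def, mul_neg] using this

lemma fenrirIntervalExp {k : ℝ} (hk : k ≠ 0) (a b : ℝ) :
    ∫ x in a..b, Real.exp (k * x) = (Real.exp (k * b) - Real.exp (k * a)) / k := by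
  have h := _root_.intervalIntegral.integral_comp_mul_left (a := a) (b := b)
    (fun x => Real.exp x) hk
  rw [h, integral_exp, smul_eq_mul, inv_mul_eq_div]

lemma fenrirWindowMain (ρp ρm : ℝ) (hρp : 0 < ρp) (hρm : 0 < ρm) (hne : ρp ≠ ρm) (W : ℝ → ℝ)
    (hW : ∀ t : ℝ, W t = if t < 0 then Real.exp (t / ρm)
      else if 0 < t then Real.exp (-t / ρp) else 1) (τ : ℝ) (hτ : 0 ≤ τ) :
    ∫ t : ℝ, W t * W (t + τ) =
      ((ρp + ρm) / 2) *
        ((ρp * Real.exp (-τ / ρp) - ρm * Real.exp (-τ / ρm)) / (ρp - ρm)) := by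
  have hρm' : ρm ≠ 0 := hρm.ne'
  have hρp' : ρp ≠ 0 := hρp.ne'
  have hpm : ρp - ρm ≠ 0 := sub_ne_zero.2 hne
  set F : ℝ → ℝ := fun t => W t * W (t + τ) with hF
  set g1 : ℝ → ℝ := fun t => Real.exp (τ / ρm) * Real.exp ((2 / ρm) * t) with hg1
  set g2 : ℝ → ℝ := fun t => Real.exp (-τ / ρp) * Real.exp ((1 / ρm - 1 / ρp) * t) with hg2
  set g3 : ℝ → ℝ := fun t => Real.exp (-τ / ρp) * Real.exp (-((2 / ρp) * t)) with hg3
  -- a.e. identification on the three pieces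
  have hne_ae : ∀ᵐ t : ℝ, t ≠ -τ := by
    refine (MeasureTheory.compl_mem_ae_iff).2 ?_
    exact measure_singleton (-τ)
  have hne0_ae : ∀ᵐ t : ℝ, t ≠ 0 := by
    refine (MeasureTheory.compl_mem_ae_iff).2 ?_
    exact measure_singleton (0 : ℝ)
  have hae1 : ∀ᵐ t : ℝ, t ∈ Set.Iic (-τ) → F t = g1 t := by
    filter_upwards [hne_ae] with t ht hmem
    have htlt : t < -τ := lt_of_le_of_ne hmem ht
    have ht0 : t < 0 := by linarith
    have ht2 : t + τ < 0 := by linarith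
    simp only [hF, hW, hg1, if_pos ht0, if_pos ht2]
    rw [← Real.exp_add, ← Real.exp_add]
    congr 1
    ring
  have hae2 : ∀ᵐ t : ℝ, t ∈ Set.Ioc (-τ) 0 → F t = g2 t := by
    filter_upwards [hne0_ae] with t ht hmem
    have ht0 : t < 0 := lt_of_le_of_ne hmem.2 ht
    have ht2 : 0 < t + τ := by have := hmem.1; linarith
    have ht2' : ¬ (t + τ < 0) := by linarith
    simp only [hF, hW, hg2, if_pos ht0, if_neg ht2', if_pos ht2]
    rw [← Real.exp_add, ← Real.exp_add]
    congr 1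
    ring
  have hae3 : ∀ᵐ t : ℝ, t ∈ Set.Ioi (0:ℝ) → F t = g3 t := by
    refine Filter.Eventually.of_forall fun t hmem => ?_
    have ht0 : 0 < t := hmem
    have ht0' : ¬ (t < 0) := by linarith
    have ht2 : 0 < t + τ := by linarith
    have ht2' : ¬ (t + τ < 0) := by linarith
    simp only [hF, hW, hg3, if_neg ht0', if_pos ht0, if_neg ht2', if_pos ht2]
    rw [← Real.exp_add, ← Real.exp_add]
    congr 1
    ring
  have heq1 : F =ᵐ[volume.restrict (Set.Iic (-τ))] g1 :=
    (ae_restrict_iff' measurableSet_Iic).2 hae1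
  have heq2 : F =ᵐ[volume.restrict (Set.Ioc (-τ) 0)] g2 :=
    (ae_restrict_iff' measurableSet_Ioc).2 hae2
  have heq3 : F =ᵐ[volume.restrict (Set.Ioi (0:ℝ))] g3 :=
    (ae_restrict_iff' measurableSet_Ioi).2 hae3
  -- integrability
  have hint1 : IntegrableOn g1 (Set.Iic (-τ)) :=
    (fenrirIntOnIic (by positivity : (0:ℝ) < 2 / ρm) (-τ)).const_mul _
  have hint2 : IntegrableOn g2 (Set.Ioc (-τ) 0) := by
    apply Continuous.integrableOn_Ioc
    fun_prop
  have hint3 : IntegrableOn g3 (Set.Ioi (0:ℝ)) :=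
    (fenrirIntOnIoi (by positivity : (0:ℝ) < 2 / ρp) 0).const_mul _
  have hI1 : IntegrableOn F (Set.Iic (-τ)) := hint1.congr heq1.symm
  have hI2 : IntegrableOn F (Set.Ioc (-τ) 0) := hint2.congr heq2.symm
  have hI3 : IntegrableOn F (Set.Ioi (0:ℝ)) := hint3.congr heq3.symm
  have hIoi : IntegrableOn F (Set.Ioi (-τ)) := by
    have := hI2.union hI3
    rwa [Set.Ioc_union_Ioi_eq_Ioi (neg_nonpos.mpr hτ)] at this
  -- split the integral
  have hsplit1 : ∫ t : ℝ, F t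
      = (∫ t in Set.Iic (-τ), F t) + ∫ t in Set.Ioi (-τ), F t :=
    (intervalIntegral.integral_Iic_add_Ioi hI1 hIoi).symm
  have hsplit2 : ∫ t in Set.Ioi (-τ), F t
      = (∫ t in Set.Ioc (-τ) 0, F t) + ∫ t in Set.Ioi (0:ℝ), F t := by
    rw [← Set.Ioc_union_Ioi_eq_Ioi (neg_nonpos.mpr hτ)]
    exact setIntegral_union (Set.Ioc_disjoint_Ioi le_rfl) measurableSet_Ioi hI2 hI3
  -- compute the three pieces
  have e1 : ∫ t in Set.Iic (-τ), F t = ρm / 2 * Real.exp (-τ / ρm) := by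
    rw [integral_congr_ae heq1]
    simp only [hg1]
    rw [MeasureTheory.integral_const_mul, fenrirIntExpIic (by positivity : (0:ℝ) < 2 / ρm)]
    rw [show (2 / ρm) * (-τ) = -τ / ρm + -(τ / ρm) by ring, Real.exp_add, Real.exp_neg]
    field_simp
  have e2 : ∫ t in Set.Ioc (-τ) 0, F t
      = ρp * ρm * (Real.exp (-τ / ρp) - Real.exp (-τ / ρm)) / (ρp - ρm) := by
    have hk : 1 / ρm - 1 / ρp ≠ 0 := by
      field_simp
      intro h
      exact hne (sub_eq_zero.1 ((div_eq_zero_iff.1 h).resolve_right (by positivity)))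
    rw [integral_congr_ae heq2]
    simp only [hg2]
    rw [← intervalIntegral.integral_of_le (by linarith : -τ ≤ (0:ℝ))]
    rw [intervalIntegral.integral_const_mul, fenrirIntervalExp hk]
    rw [mul_zero, Real.exp_zero,
      show (1 / ρm - 1 / ρp) * (-τ) = -τ / ρm + -(-τ / ρp) by ring,
      Real.exp_add, Real.exp_neg]
    have hPne : Real.exp (-τ / ρp) ≠ 0 := Real.exp_ne_zero _
    field_simp
  have e3 : ∫ t in Set.Ioi (0:ℝ), F t = ρp / 2 * Real.exp (-τ / ρp) := by
    rw [integral_congr_ae heq3]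
    simp only [hg3]
    rw [MeasureTheory.integral_const_mul, fenrirIntExpIoi (by positivity : (0:ℝ) < 2 / ρp)]
    simp [Real.exp_zero]
    ring
  rw [hsplit1, hsplit2, e1, e2, e3]
  field_simp
  ring

/-- Autocorrelation of the asymmetric exponential window: for
`W(t) = e^{t/ρ₋}` for `t < 0`, `W(t) = e^{-t/ρ₊}` for `t > 0`, `W(0) = 1`,
`∫ W(t) W(t + τ) dt = ((ρ₊ + ρ₋)/2) (ρ₊ e^{-|τ|/ρ₊} - ρ₋ e^{-|τ|/ρ₋})/(ρ₊ - ρ₋)`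
(sum-of-Matérn-1/2 kernel). -/
theorem fenrir_window_asymmetric_exponential
    (ρp ρm : ℝ) (hρp : 0 < ρp) (hρm : 0 < ρm) (hne : ρp ≠ ρm) (W : ℝ → ℝ)
    (hW : ∀ t : ℝ, W t = if t < 0 then Real.exp (t / ρm)
      else if 0 < t then Real.exp (-t / ρp) else 1) (τ : ℝ) :
    ∫ t : ℝ, W t * W (t + τ) =
      ((ρp + ρm) / 2) *
        ((ρp * Real.exp (-|τ| / ρp) - ρm * Real.exp (-|τ| / ρm)) / (ρp - ρm)) := by
  rcases le_or_gt 0 τ with h | h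
  · rw [abs_of_nonneg h]
    exact fenrirWindowMain ρp ρm hρp hρm hne W hW τ h
  · rw [abs_of_neg h]
    have hsym : ∫ t : ℝ, W t * W (t + τ) = ∫ t : ℝ, W t * W (t + -τ) := by
      calc ∫ t : ℝ, W t * W (t + τ)
          = ∫ t : ℝ, W (t + -τ) * W (t + -τ + τ) :=
            (MeasureTheory.integral_add_right_eq_self (fun t => W t * W (t + τ)) (-τ)).symm
        _ = ∫ t : ℝ, W t * W (t + -τ) := by
            simp only [neg_add_cancel_right]
            simp_rw [mul_comm]
    rw [hsym]
    exact fenrirWindowMain ρp ρm hρp hρm hne W hW (-τ) (by linarith)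
end

section
/- Let (Ω, 𝔽, P) be a probability space, λ > 0, T > 0, N : Ω → ℕ a Poisson random variable with parameter λT, and (U_k)_{k∈ℕ} an i.i.d. sequence uniformly distributed on [0, T], independent of N. Let W : ℝ → ℝ be integrable and bounded. Then for every τ ∈ ℝ, E[ ∫_ℝ (Σ_{i=0}^{N−1} W(t − U_i)) · (Σ_{j=0}^{N−1} W(t + τ − U_j)) dt ] = λT ∫_ℝ W(t) W(t + τ) dt + (λT)² ∫_ℝ w(t) w(t + τ) dt, where w(t) = (1/T) ∫₀^T W(t − u) du. -/
open MeasureTheory ProbabilityTheory intervalIntegral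
open scoped NNReal ENNReal

namespace FenrirAux

lemma sum_sum_ite (n : ℕ) (A B : ℝ) :
    ∑ i ∈ Finset.range n, ∑ j ∈ Finset.range n, (if i = j then A else B)
      = n * A + ((n : ℝ) ^ 2 - n) * B := by
  have h : ∀ i ∈ Finset.range n, ∑ j ∈ Finset.range n, (if i = j then A else B)
      = (A - B) + n * B := by
    intro i hi
    have : ∀ j, (if i = j then A else B) = (if i = j then A - B else 0) + B := by
      intro j; by_cases h : i = j <;> simp [h]
    simp_rw [this, Finset.sum_add_distrib, Finset.sum_ite_eq, if_pos hi, Finset.sum_const,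
      Finset.card_range, nsmul_eq_mul]
  rw [Finset.sum_congr rfl h, Finset.sum_const, Finset.card_range, nsmul_eq_mul]
  ring

lemma hasSum_exp_div (r : ℝ) : HasSum (fun n : ℕ => r ^ n / n.factorial) (Real.exp r) := by
  rw [Real.exp_eq_exp_ℝ]
  exact NormedSpace.expSeries_div_hasSum_exp r

lemma hasSum_n_poisson (r : ℝ) :
    HasSum (fun n : ℕ => (n : ℝ) * (r ^ n / n.factorial)) (r * Real.exp r) := by
  have h : HasSum (fun n : ℕ => (((n : ℕ) + 1 : ℕ) : ℝ) * (r ^ (n + 1) / (n + 1).factorial))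
      (r * Real.exp r) := by
    have := (hasSum_exp_div r).mul_left r
    refine this.congr_fun fun n => ?_
    have h1 : ((n + 1 : ℕ) : ℝ) ≠ 0 := by positivity
    have h2 : ((n.factorial : ℕ) : ℝ) ≠ 0 := by positivity
    rw [Nat.factorial_succ]
    push_cast
    field_simp
    ring
  have h2 := (hasSum_nat_add_iff (f := fun n : ℕ => (n : ℝ) * (r ^ n / n.factorial)) 1).mp h
  simpa using h2

lemma hasSum_nn_poisson (r : ℝ) :
    HasSum (fun n : ℕ => ((n : ℝ) ^ 2 - n) * (r ^ n / n.factorial)) (r ^ 2 * Real.exp r) := by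
  have h : HasSum (fun n : ℕ => (((n + 2 : ℕ) : ℝ) ^ 2 - ((n + 2 : ℕ) : ℝ)) *
      (r ^ (n + 2) / (n + 2).factorial)) (r ^ 2 * Real.exp r) := by
    have := (hasSum_exp_div r).mul_left (r ^ 2)
    refine this.congr_fun fun n => ?_
    have h2 : ((n.factorial : ℕ) : ℝ) ≠ 0 := by positivity
    have h3 : ((n : ℝ) + 1) ≠ 0 := by positivity
    have h4 : ((n : ℝ) + 2) ≠ 0 := by positivity
    rw [Nat.factorial_succ, Nat.factorial_succ]
    push_cast
    field_simp
    ring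
  have h2 := (hasSum_nat_add_iff
    (f := fun n : ℕ => ((n : ℝ) ^ 2 - n) * (r ^ n / n.factorial)) 2).mp h
  simpa [Finset.sum_range_succ] using h2

lemma hasSum_poisson_id (r : ℝ) :
    HasSum (fun n : ℕ => (n : ℝ) * (Real.exp (-r) * r ^ n / n.factorial)) r := by
  have h := (hasSum_n_poisson r).mul_left (Real.exp (-r))
  have he : Real.exp (-r) * (r * Real.exp r) = r := by
    rw [show Real.exp (-r) * (r * Real.exp r) = (Real.exp (-r) * Real.exp r) * r by ring,
      ← Real.exp_add]
    simp
  rw [he] at h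
  exact h.congr_fun fun n => by ring

lemma hasSum_poisson_sq (r : ℝ) :
    HasSum (fun n : ℕ => ((n : ℝ) ^ 2 - n) * (Real.exp (-r) * r ^ n / n.factorial)) (r ^ 2) := by
  have h := (hasSum_nn_poisson r).mul_left (Real.exp (-r))
  have he : Real.exp (-r) * (r ^ 2 * Real.exp r) = r ^ 2 := by
    rw [show Real.exp (-r) * (r ^ 2 * Real.exp r) = (Real.exp (-r) * Real.exp r) * r ^ 2 by ring,
      ← Real.exp_add]
    simp
  rw [he] at h
  exact h.congr_fun fun n => by ring

lemma summable_poisson_sq (r : ℝ) :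
    Summable (fun n : ℕ => (n : ℝ) ^ 2 * (Real.exp (-r) * r ^ n / n.factorial)) := by
  have h := ((hasSum_poisson_sq r).add (hasSum_poisson_id r)).summable
  exact h.congr fun n => by ring

lemma poisson_tsum (r A B : ℝ) :
    HasSum (fun n : ℕ => (Real.exp (-r) * r ^ n / n.factorial) *
      ((n : ℝ) * A + ((n : ℝ) ^ 2 - n) * B)) (r * A + r ^ 2 * B) := by
  have h := ((hasSum_poisson_id r).mul_right A).add ((hasSum_poisson_sq r).mul_right B)
  exact h.congr_fun fun n => by ring

theorem aux
    {Ω : Type*} [MeasurableSpace Ω] (P : Measure Ω) [IsProbabilityMeasure P]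
    (lam T : ℝ) (hlam : 0 < lam) (hT : 0 < T)
    (N : Ω → ℕ) (hN : Measurable N)
    (hNdist : Measure.map N P = poissonMeasure (⟨lam * T, le_of_lt (by positivity)⟩ : ℝ≥0))
    (U : ℕ → Ω → ℝ) (hUmeas : ∀ k, Measurable (U k))
    (hUdist : ∀ k, Measure.map (U k) P =
      (ENNReal.ofReal T)⁻¹ • volume.restrict (Set.Icc (0 : ℝ) T))
    (hUindep : iIndepFun U P)
    (hNU : IndepFun N (fun ω k => U k ω) P)
    (W : ℝ → ℝ) (hWmeas : Measurable W) (hWint : Integrable W)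
    (C : ℝ) (hC : 0 ≤ C) (hWbdd : ∀ t, |W t| ≤ C)
    (w : ℝ → ℝ) (hw : ∀ t : ℝ, w t = (1 / T) * ∫ u in (0 : ℝ)..T, W (t - u))
    (τ : ℝ) :
    ∫ ω, (∫ t : ℝ, (∑ i ∈ Finset.range (N ω), W (t - U i ω)) *
        (∑ j ∈ Finset.range (N ω), W (t + τ - U j ω))) ∂P =
      lam * T * (∫ t : ℝ, W t * W (t + τ)) +
        (lam * T) ^ 2 * ∫ t : ℝ, w t * w (t + τ) := by
  set μ : Measure ℝ := (ENNReal.ofReal T)⁻¹ • volume.restrict (Set.Icc (0 : ℝ) T) with hμdef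
  have hμprob : IsProbabilityMeasure μ := by
    rw [← hUdist 0]
    exact Measure.isProbabilityMeasure_map (hUmeas 0).aemeasurable
  set A : ℝ := ∫ t : ℝ, W t * W (t + τ) with hA
  set B : ℝ := ∫ t : ℝ, w t * w (t + τ) with hB
  set K : ℝ × ℝ → ℝ := fun p => ∫ t : ℝ, W (t - p.1) * W (t + τ - p.2) with hK
  -- measurability of K
  have hKmeas : Measurable K := by
    have h : StronglyMeasurable fun q : (ℝ × ℝ) × ℝ => W (q.2 - q.1.1) * W (q.2 + τ - q.1.2) :=
      ((hWmeas.comp (measurable_snd.sub (measurable_fst.fst))).mul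
        (hWmeas.comp ((measurable_snd.add_const τ).sub (measurable_fst.snd)))).stronglyMeasurable
    exact h.integral_prod_right'.measurable
  -- integrability of each integrand
  have hint : ∀ a b : ℝ, Integrable (fun t => W (t - a) * W (t + τ - b)) volume := by
    intro a b
    have h1 : Integrable (fun t => W (t - a)) volume := hWint.comp_sub_right a
    refine (h1.abs.const_mul C).mono' ?_ ?_
    · exact ((hWmeas.comp (measurable_id.sub_const a)).mul
        (hWmeas.comp ((measurable_id.add_const τ).sub_const b))).aestronglyMeasurable
    · refine Filter.Eventually.of_forall fun t => ?_
      have : |W (t - a) * W (t + τ - b)| = |W (t - a)| * |W (t + τ - b)| := abs_mul _ _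
      rw [Real.norm_eq_abs, this]
      calc |W (t - a)| * |W (t + τ - b)| ≤ |W (t - a)| * C :=
            mul_le_mul_of_nonneg_left (hWbdd _) (abs_nonneg _)
        _ = C * |W (t - a)| := mul_comm _ _
  set Cg : ℝ := C * ∫ t : ℝ, |W t| with hCg
  have hCg0 : 0 ≤ Cg := mul_nonneg hC (integral_nonneg fun t => abs_nonneg _)
  -- bound on the absolute integral
  have habs : ∀ a b : ℝ, (∫ t : ℝ, |W (t - a) * W (t + τ - b)|) ≤ Cg := by
    intro a b
    have h1 : Integrable (fun t => W (t - a)) volume := hWint.comp_sub_right a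
    have hle : (∫ t : ℝ, |W (t - a) * W (t + τ - b)|) ≤ ∫ t : ℝ, C * |W (t - a)| := by
      refine integral_mono (hint a b).abs (h1.abs.const_mul C) fun t => ?_
      rw [abs_mul]
      calc |W (t - a)| * |W (t + τ - b)| ≤ |W (t - a)| * C :=
            mul_le_mul_of_nonneg_left (hWbdd _) (abs_nonneg _)
        _ = C * |W (t - a)| := mul_comm _ _
    refine hle.trans ?_
    rw [MeasureTheory.integral_const_mul, hCg]
    have : (∫ t : ℝ, |W (t - a)|) = ∫ t : ℝ, |W t| := by
      exact integral_sub_right_eq_self (fun t => |W t|) a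
    rw [this]
  have hKbdd : ∀ p : ℝ × ℝ, |K p| ≤ Cg := by
    intro p
    show |∫ t : ℝ, W (t - p.1) * W (t + τ - p.2)| ≤ Cg
    have h := MeasureTheory.norm_integral_le_integral_norm (μ := volume)
      (f := fun t => W (t - p.1) * W (t + τ - p.2))
    simp only [Real.norm_eq_abs] at h
    exact h.trans (habs _ _)
  -- diagonal value
  have hKdiag : ∀ x : ℝ, K (x, x) = A := by
    intro x
    show (∫ t : ℝ, W (t - x) * W (t + τ - x)) = A
    rw [hA]
    have : (fun t => W (t - x) * W (t + τ - x)) = fun t => (fun s => W s * W (s + τ)) (t - x) := by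
      funext t; simp only []; congr 2; ring
    rw [this]
    exact integral_sub_right_eq_self (fun s => W s * W (s + τ)) x
  haveI := hμprob
  -- uniform average
  have havg : ∀ s : ℝ, (∫ y, W (s - y) ∂μ) = w s := by
    intro s
    rw [hw s, hμdef, MeasureTheory.integral_smul_measure, ENNReal.toReal_inv, ENNReal.toReal_ofReal hT.le,
      MeasureTheory.integral_Icc_eq_integral_Ioc, ← intervalIntegral.integral_of_le hT.le,
      smul_eq_mul, one_div]
  have hwrepr : w = fun s => ∫ y, W (s - y) ∂μ := funext fun s => (havg s).symm
  have hwmeas : Measurable w := by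
    rw [hwrepr]
    have h : StronglyMeasurable fun q : ℝ × ℝ => W (q.1 - q.2) :=
      (hWmeas.comp (measurable_fst.sub measurable_snd)).stronglyMeasurable
    exact h.integral_prod_right'.measurable
  have hwbdd : ∀ t, |w t| ≤ C := by
    intro t
    rw [← havg t]
    have h1 : Integrable (fun y => |W (t - y)|) μ := by
      refine (integrable_const C).mono' ?_ ?_
      · exact (hWmeas.comp (measurable_const.sub measurable_id)).abs.aestronglyMeasurable
      · exact Filter.Eventually.of_forall fun y => by
          rw [Real.norm_eq_abs, abs_abs]; exact hWbdd _
    calc |∫ y, W (t - y) ∂μ| ≤ ∫ y, |W (t - y)| ∂μ := by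
          have := MeasureTheory.norm_integral_le_integral_norm (μ := μ)
            (f := fun y => W (t - y))
          simpa [Real.norm_eq_abs] using this
      _ ≤ ∫ _y, C ∂μ := integral_mono h1 (integrable_const C) fun y => hWbdd _
      _ = C := by simp
  -- first Fubini: average over the second granule time
  have hK6a : ∀ x : ℝ, (∫ y, K (x, y) ∂μ) = ∫ t : ℝ, W (t - x) * w (t + τ) := by
    intro x
    have hfm : AEStronglyMeasurable
        (Function.uncurry fun y t => W (t - x) * W (t + τ - y)) (μ.prod volume) := by
      apply Measurable.aestronglyMeasurable
      show Measurable fun q : ℝ × ℝ => W (q.2 - x) * W (q.2 + τ - q.1)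
      exact (hWmeas.comp (measurable_snd.sub_const x)).mul
        (hWmeas.comp ((measurable_snd.add_const τ).sub measurable_fst))
    have hfint : Integrable
        (Function.uncurry fun y t => W (t - x) * W (t + τ - y)) (μ.prod volume) := by
      rw [integrable_prod_iff hfm]
      constructor
      · exact Filter.Eventually.of_forall fun y => hint x y
      · refine (integrable_const Cg).mono' hfm.norm.integral_prod_right' ?_
        refine Filter.Eventually.of_forall fun y => ?_
        have h0 : (0:ℝ) ≤ ∫ t : ℝ, ‖W (t - x) * W (t + τ - y)‖ :=
          integral_nonneg fun t => norm_nonneg _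
        show ‖∫ t : ℝ, ‖W (t - x) * W (t + τ - y)‖‖ ≤ Cg
        rw [Real.norm_eq_abs, abs_of_nonneg h0]
        simpa only [Real.norm_eq_abs] using habs x y
    have hswap := MeasureTheory.integral_integral_swap hfint
    have hinner : ∀ t : ℝ, (∫ y, W (t - x) * W (t + τ - y) ∂μ) = W (t - x) * w (t + τ) := by
      intro t; rw [MeasureTheory.integral_const_mul, havg (t + τ)]
    calc (∫ y, K (x, y) ∂μ) = ∫ y, (∫ t : ℝ, W (t - x) * W (t + τ - y)) ∂μ := rfl
      _ = ∫ t : ℝ, ∫ y, W (t - x) * W (t + τ - y) ∂μ := hswap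
      _ = ∫ t : ℝ, W (t - x) * w (t + τ) := by simp_rw [hinner]
  -- second Fubini: average over the first granule time
  have hK6b : (∫ x, (∫ t : ℝ, W (t - x) * w (t + τ)) ∂μ) = B := by
    have hfm : AEStronglyMeasurable
        (Function.uncurry fun x t => W (t - x) * w (t + τ)) (μ.prod volume) := by
      apply Measurable.aestronglyMeasurable
      show Measurable fun q : ℝ × ℝ => W (q.2 - q.1) * w (q.2 + τ)
      exact (hWmeas.comp (measurable_snd.sub measurable_fst)).mul
        (hwmeas.comp (measurable_snd.add_const τ))
    have hsec : ∀ x : ℝ, Integrable (fun t => W (t - x) * w (t + τ)) volume := by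
      intro x
      refine ((hWint.comp_sub_right x).abs.const_mul C).mono' ?_ ?_
      · exact ((hWmeas.comp (measurable_id.sub_const x)).mul
          (hwmeas.comp (measurable_id.add_const τ))).aestronglyMeasurable
      · refine Filter.Eventually.of_forall fun t => ?_
        rw [Real.norm_eq_abs, abs_mul]
        calc |W (t - x)| * |w (t + τ)| ≤ |W (t - x)| * C :=
              mul_le_mul_of_nonneg_left (hwbdd _) (abs_nonneg _)
          _ = C * |W (t - x)| := mul_comm _ _
    have habs2 : ∀ x : ℝ, (∫ t : ℝ, |W (t - x) * w (t + τ)|) ≤ Cg := by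
      intro x
      have h1 : Integrable (fun t => W (t - x)) volume := hWint.comp_sub_right x
      have hle : (∫ t : ℝ, |W (t - x) * w (t + τ)|) ≤ ∫ t : ℝ, C * |W (t - x)| := by
        refine integral_mono (hsec x).abs (h1.abs.const_mul C) fun t => ?_
        rw [abs_mul]
        calc |W (t - x)| * |w (t + τ)| ≤ |W (t - x)| * C :=
              mul_le_mul_of_nonneg_left (hwbdd _) (abs_nonneg _)
          _ = C * |W (t - x)| := mul_comm _ _
      refine hle.trans ?_
      rw [MeasureTheory.integral_const_mul, hCg, integral_sub_right_eq_self (fun t => |W t|) x]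
    have hfint : Integrable
        (Function.uncurry fun x t => W (t - x) * w (t + τ)) (μ.prod volume) := by
      rw [integrable_prod_iff hfm]
      constructor
      · exact Filter.Eventually.of_forall hsec
      · refine (integrable_const Cg).mono' hfm.norm.integral_prod_right' ?_
        refine Filter.Eventually.of_forall fun x => ?_
        have h0 : (0:ℝ) ≤ ∫ t : ℝ, ‖W (t - x) * w (t + τ)‖ :=
          integral_nonneg fun t => norm_nonneg _
        show ‖∫ t : ℝ, ‖W (t - x) * w (t + τ)‖‖ ≤ Cg
        rw [Real.norm_eq_abs, abs_of_nonneg h0]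
        simpa only [Real.norm_eq_abs] using habs2 x
    have hswap := MeasureTheory.integral_integral_swap hfint
    have hinner : ∀ t : ℝ, (∫ x, W (t - x) * w (t + τ) ∂μ) = w t * w (t + τ) := by
      intro t; rw [MeasureTheory.integral_mul_const, havg t]
    calc (∫ x, (∫ t : ℝ, W (t - x) * w (t + τ)) ∂μ)
        = ∫ t : ℝ, ∫ x, W (t - x) * w (t + τ) ∂μ := hswap
      _ = ∫ t : ℝ, w t * w (t + τ) := by simp_rw [hinner]
      _ = B := hB.symm
  -- off-diagonal expectation
  have hoff : ∀ i j : ℕ, i ≠ j → (∫ ω, K (U i ω, U j ω) ∂P) = B := by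
    intro i j hij
    have hpair : Measure.map (fun ω => (U i ω, U j ω)) P = μ.prod μ := by
      have hind : IndepFun (U i) (U j) P := hUindep.indepFun hij
      rw [indepFun_iff_map_prod_eq_prod_map_map (hUmeas i).aemeasurable
        (hUmeas j).aemeasurable] at hind
      rw [hind, hUdist i, hUdist j]
    have hmp : AEMeasurable (fun ω => (U i ω, U j ω)) P :=
      ((hUmeas i).prodMk (hUmeas j)).aemeasurable
    have h1 : (∫ ω, K (U i ω, U j ω) ∂P)
        = ∫ p, K p ∂(Measure.map (fun ω => (U i ω, U j ω)) P) :=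
      (integral_map hmp (by rw [hpair]; exact hKmeas.aestronglyMeasurable)).symm
    rw [h1, hpair]
    have hKint : Integrable K (μ.prod μ) :=
      (integrable_const Cg).mono' hKmeas.aestronglyMeasurable
        (Filter.Eventually.of_forall fun p => by rw [Real.norm_eq_abs]; exact hKbdd p)
    rw [MeasureTheory.integral_prod K hKint]
    simp_rw [hK6a]
    exact hK6b
  -- diagonal expectation
  have hdiag : ∀ i : ℕ, (∫ ω, K (U i ω, U i ω) ∂P) = A := by
    intro i
    simp_rw [hKdiag]
    simp
  -- integrability of the composed kernels
  have hGint : ∀ i j : ℕ, Integrable (fun ω => K (U i ω, U j ω)) P := fun i j =>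
    (integrable_const Cg).mono'
      ((hKmeas.comp ((hUmeas i).prodMk (hUmeas j))).aestronglyMeasurable)
      (Filter.Eventually.of_forall fun ω => by rw [Real.norm_eq_abs]; exact hKbdd _)
  -- expectation for a fixed number of granules
  have hEn : ∀ n : ℕ, (∫ ω, (∑ i ∈ Finset.range n, ∑ j ∈ Finset.range n, K (U i ω, U j ω)) ∂P)
      = n * A + ((n : ℝ) ^ 2 - n) * B := by
    intro n
    rw [integral_finset_sum _ fun i _ => integrable_finset_sum _ fun j _ => hGint i j]
    have h : ∀ i ∈ Finset.range n, (∫ ω, ∑ j ∈ Finset.range n, K (U i ω, U j ω) ∂P)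
        = ∑ j ∈ Finset.range n, if i = j then A else B := by
      intro i _
      rw [integral_finset_sum _ fun j _ => hGint i j]
      refine Finset.sum_congr rfl fun j _ => ?_
      by_cases h : i = j
      · subst h; rw [if_pos rfl]; exact hdiag i
      · rw [if_neg h]; exact hoff i j h
    rw [Finset.sum_congr rfl h, sum_sum_ite]
  -- the random double sum
  set H : ℕ → Ω → ℝ :=
    fun n ω => ∑ i ∈ Finset.range n, ∑ j ∈ Finset.range n, K (U i ω, U j ω) with hH
  have hHmeas : ∀ n, Measurable (H n) := fun n =>
    Finset.measurable_sum _ fun i _ => Finset.measurable_sum _ fun j _ =>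
      hKmeas.comp ((hUmeas i).prodMk (hUmeas j))
  have hHint : ∀ n, Integrable (H n) P := fun n =>
    integrable_finset_sum _ fun i _ => integrable_finset_sum _ fun j _ => hGint i j
  have hHbdd : ∀ n ω, |H n ω| ≤ (n : ℝ) ^ 2 * Cg := by
    intro n ω
    calc |H n ω| ≤ ∑ i ∈ Finset.range n, |∑ j ∈ Finset.range n, K (U i ω, U j ω)| :=
          Finset.abs_sum_le_sum_abs _ _
      _ ≤ ∑ i ∈ Finset.range n, ∑ j ∈ Finset.range n, |K (U i ω, U j ω)| :=
          Finset.sum_le_sum fun i _ => Finset.abs_sum_le_sum_abs _ _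
      _ ≤ ∑ i ∈ Finset.range n, ∑ j ∈ Finset.range n, Cg :=
          Finset.sum_le_sum fun i _ => Finset.sum_le_sum fun j _ => hKbdd _
      _ = (n : ℝ) ^ 2 * Cg := by
          simp only [Finset.sum_const, Finset.card_range, nsmul_eq_mul]
          ring
  set F : Ω → ℝ := fun ω => ∫ t : ℝ, (∑ i ∈ Finset.range (N ω), W (t - U i ω)) *
      (∑ j ∈ Finset.range (N ω), W (t + τ - U j ω)) with hF
  have hFH : ∀ ω, F ω = H (N ω) ω := by
    intro ω
    have h1 : (fun t : ℝ => (∑ i ∈ Finset.range (N ω), W (t - U i ω)) *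
        (∑ j ∈ Finset.range (N ω), W (t + τ - U j ω)))
        = fun t : ℝ => ∑ i ∈ Finset.range (N ω), ∑ j ∈ Finset.range (N ω),
            W (t - U i ω) * W (t + τ - U j ω) := by
      funext t
      exact Finset.sum_mul_sum _ _ _ _
    show (∫ t : ℝ, (∑ i ∈ Finset.range (N ω), W (t - U i ω)) *
        (∑ j ∈ Finset.range (N ω), W (t + τ - U j ω))) = H (N ω) ω
    rw [h1, integral_finset_sum _ fun i _ => integrable_finset_sum _ fun j _ => hint _ _]
    refine Finset.sum_congr rfl fun i _ => ?_
    rw [integral_finset_sum _ fun j _ => hint _ _]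
  have hFmeas : Measurable F := by
    have h2 : Measurable fun q : Ω × ℕ => H q.2 q.1 :=
      measurable_from_prod_countable_left fun n => hHmeas n
    have h3 : F = (fun q : Ω × ℕ => H q.2 q.1) ∘ fun ω => (ω, N ω) := by
      funext ω
      exact hFH ω
    rw [h3]
    exact h2.comp (measurable_id.prodMk hN)
  -- Poisson moments and integrability of F
  have hPn : ∀ n : ℕ, P (N ⁻¹' {n})
      = ENNReal.ofReal (poissonPMFReal (⟨lam * T, le_of_lt (by positivity)⟩ : ℝ≥0) n) := by
    intro n
    rw [← Measure.map_apply hN (measurableSet_singleton n), hNdist]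
    exact poissonMeasure_singleton _ n
  have hNsq : Integrable (fun ω => ((N ω : ℝ)) ^ 2) P := by
    have hmf : Measurable fun n : ℕ => ((n : ℝ)) ^ 2 := measurable_from_top
    have hiff := integrable_map_measure (μ := P) (f := N) (g := fun n : ℕ => ((n : ℝ)) ^ 2)
      (by rw [hNdist]; exact hmf.aestronglyMeasurable) hN.aemeasurable
    refine hiff.mp ?_
    rw [hNdist]
    constructor
    · exact hmf.aestronglyMeasurable
    · show (∫⁻ n, (‖((n : ℝ)) ^ 2‖₊ : ℝ≥0∞)
        ∂(poissonMeasure (⟨lam * T, le_of_lt (by positivity)⟩ : ℝ≥0))) < ⊤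
      rw [lintegral_countable']
      have hterm : ∀ n : ℕ, (‖((n : ℝ)) ^ 2‖₊ : ℝ≥0∞) *
          (poissonMeasure (⟨lam * T, le_of_lt (by positivity)⟩ : ℝ≥0)) {n}
          = ENNReal.ofReal ((n : ℝ) ^ 2 *
            (Real.exp (-(lam * T)) * (lam * T) ^ n / n.factorial)) := by
        intro n
        have hs : (poissonMeasure (⟨lam * T, le_of_lt (by positivity)⟩ : ℝ≥0)) {n}
            = ENNReal.ofReal (Real.exp (-(lam * T)) * (lam * T) ^ n / n.factorial) :=
          poissonMeasure_singleton _ n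
        rw [hs]
        rw [← enorm_eq_nnnorm, Real.enorm_eq_ofReal (by positivity)]
        exact (ENNReal.ofReal_mul (by positivity)).symm
      rw [tsum_congr hterm]
      rw [← ENNReal.ofReal_tsum_of_nonneg (fun n => by positivity) (summable_poisson_sq (lam * T))]
      exact ENNReal.ofReal_lt_top
  have hFint : Integrable F P := by
    refine (hNsq.mul_const Cg).mono' hFmeas.aestronglyMeasurable ?_
    refine Filter.Eventually.of_forall fun ω => ?_
    rw [Real.norm_eq_abs, hFH ω]
    exact hHbdd (N ω) ω
  -- partition over the values of N
  have hmeasn : ∀ n : ℕ, MeasurableSet (N ⁻¹' {n}) := fun n => hN (measurableSet_singleton n)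
  have hpart : (∫ ω, F ω ∂P) = ∑' n : ℕ, ∫ ω in N ⁻¹' {n}, F ω ∂P := by
    have hdisj : Pairwise (Function.onFun Disjoint fun n : ℕ => N ⁻¹' {n}) := by
      intro m n hmn
      refine Set.disjoint_left.mpr fun ω hm hn => hmn ?_
      have h1 : N ω = m := hm
      have h2 : N ω = n := hn
      rw [← h1, ← h2]
    have hun : (⋃ n : ℕ, N ⁻¹' {n}) = Set.univ := by
      ext ω; simp
    have h := integral_iUnion hmeasn hdisj (hFint.integrableOn)
    rw [hun, Measure.restrict_univ] at h
    exact h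
  -- conditional expectation on each piece via independence
  have hpiece : ∀ n : ℕ, (∫ ω in N ⁻¹' {n}, F ω ∂P)
      = (Real.exp (-(lam * T)) * (lam * T) ^ n / n.factorial) *
        ((n : ℝ) * A + ((n : ℝ) ^ 2 - n) * B) := by
    intro n
    have h1 : (∫ ω in N ⁻¹' {n}, F ω ∂P) = ∫ ω in N ⁻¹' {n}, H n ω ∂P := by
      refine setIntegral_congr_fun (hmeasn n) fun ω hω => ?_
      have hωn : N ω = n := hω
      rw [hFH ω, hωn]
    have h2 : (∫ ω in N ⁻¹' {n}, H n ω ∂P)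
        = ∫ ω, (({n} : Set ℕ).indicator (fun _ => (1 : ℝ)) (N ω)) * H n ω ∂P := by
      rw [← MeasureTheory.integral_indicator (hmeasn n)]
      congr 1
      funext ω
      by_cases hω : N ω = n <;>
        simp [Set.indicator_apply, Set.mem_preimage, hω]
    have hφmeas : Measurable (({n} : Set ℕ).indicator (fun _ => (1 : ℝ))) := measurable_from_top
    have hΦmeas : Measurable (fun u : ℕ → ℝ =>
        ∑ i ∈ Finset.range n, ∑ j ∈ Finset.range n, K (u i, u j)) :=
      Finset.measurable_sum _ fun i _ => Finset.measurable_sum _ fun j _ =>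
        hKmeas.comp ((measurable_pi_apply i).prodMk (measurable_pi_apply j))
    have hind : IndepFun (fun ω => ({n} : Set ℕ).indicator (fun _ => (1 : ℝ)) (N ω)) (H n) P :=
      hNU.comp hφmeas hΦmeas
    have hXint : Integrable (fun ω => ({n} : Set ℕ).indicator (fun _ => (1 : ℝ)) (N ω)) P := by
      refine (integrable_const (1 : ℝ)).mono' (hφmeas.comp hN).aestronglyMeasurable ?_
      refine Filter.Eventually.of_forall fun ω => ?_
      by_cases hω : N ω = n <;> simp [Set.indicator_apply, hω]
    have h3 := hind.integral_fun_mul_eq_mul_integral hXint.1 (hHint n).1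
    have h4 : (∫ ω, ({n} : Set ℕ).indicator (fun _ => (1 : ℝ)) (N ω) ∂P)
        = (P (N ⁻¹' {n})).toReal := by
      have he : (fun ω => ({n} : Set ℕ).indicator (fun _ => (1 : ℝ)) (N ω))
          = (N ⁻¹' {n}).indicator (fun _ => (1 : ℝ)) := by
        funext ω
        by_cases hω : N ω = n <;>
          simp [Set.indicator_apply, Set.mem_preimage, hω]
      rw [he, integral_indicator_const (1 : ℝ) (hmeasn n), smul_eq_mul, mul_one, measureReal_def]
    calc (∫ ω in N ⁻¹' {n}, F ω ∂P) = ∫ ω, (({n} : Set ℕ).indicator (fun _ => (1 : ℝ)) (N ω)) *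
          H n ω ∂P := by rw [h1, h2]
      _ = (∫ ω, ({n} : Set ℕ).indicator (fun _ => (1 : ℝ)) (N ω) ∂P) * ∫ ω, H n ω ∂P := h3
      _ = (Real.exp (-(lam * T)) * (lam * T) ^ n / n.factorial) *
          ((n : ℝ) * A + ((n : ℝ) ^ 2 - n) * B) := by
        rw [h4, hPn n, ENNReal.toReal_ofReal (by exact poissonPMFReal_nonneg), hEn n]
        rfl
  -- conclusion
  show (∫ ω, F ω ∂P) = lam * T * A + (lam * T) ^ 2 * B
  rw [hpart, tsum_congr hpiece, (poisson_tsum (lam * T) A B).tsum_eq]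

end FenrirAux

/-- Covariance kernel of the granulation model: within a packet, a Poisson number `N`
(of parameter `λ T`) of granules with common profile `W` appear at i.i.d. uniform times
on `[0, T]`; the expected lagged product integrates to the sum of the single-granule
autocorrelation (weight `λT`) and the autocorrelation of the time-averaged profile `w`
(weight `(λT)²`). -/
theorem fenrir_granulation_kernel
    {Ω : Type*} [MeasurableSpace Ω] (P : Measure Ω) [IsProbabilityMeasure P]
    (lam T : ℝ) (hlam : 0 < lam) (hT : 0 < T)
    (N : Ω → ℕ) (hN : Measurable N)
    (hNdist : Measure.map N P = poissonMeasure (⟨lam * T, by positivity⟩ : ℝ≥0))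
    (U : ℕ → Ω → ℝ) (hUmeas : ∀ k, Measurable (U k))
    (hUdist : ∀ k, Measure.map (U k) P =
      (ENNReal.ofReal T)⁻¹ • volume.restrict (Set.Icc (0 : ℝ) T))
    (hUindep : iIndepFun U P)
    (hNU : IndepFun N (fun ω k => U k ω) P)
    (W : ℝ → ℝ) (hWint : Integrable W) (hWbdd : ∃ C, ∀ t, |W t| ≤ C)
    (w : ℝ → ℝ) (hw : ∀ t : ℝ, w t = (1 / T) * ∫ u in (0 : ℝ)..T, W (t - u))
    (τ : ℝ) :
    ∫ ω, (∫ t : ℝ, (∑ i ∈ Finset.range (N ω), W (t - U i ω)) *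
        (∑ j ∈ Finset.range (N ω), W (t + τ - U j ω))) ∂P =
      lam * T * (∫ t : ℝ, W t * W (t + τ)) +
        (lam * T) ^ 2 * ∫ t : ℝ, w t * w (t + τ) := by
  obtain ⟨C₀, hC₀⟩ := hWbdd
  have hC : 0 ≤ C₀ := le_trans (abs_nonneg _) (hC₀ 0)
  have hsm : AEStronglyMeasurable W volume := hWint.1
  set V₀ : ℝ → ℝ := hsm.mk W with hV₀def
  have hV₀meas : StronglyMeasurable V₀ := hsm.stronglyMeasurable_mk
  have haeV₀ : W =ᵐ[volume] V₀ := hsm.ae_eq_mk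
  set V : ℝ → ℝ := fun t => if |V₀ t| ≤ C₀ then V₀ t else 0 with hVdef
  have hVmeas : Measurable V :=
    Measurable.ite (measurableSet_le hV₀meas.measurable.abs measurable_const)
      hV₀meas.measurable measurable_const
  have haeV : W =ᵐ[volume] V := by
    filter_upwards [haeV₀] with t ht
    have hb : |V₀ t| ≤ C₀ := by rw [← ht]; exact hC₀ t
    show W t = if |V₀ t| ≤ C₀ then V₀ t else 0
    rw [if_pos hb, ht]
  have hVbdd : ∀ t, |V t| ≤ C₀ := by
    intro t
    show |if |V₀ t| ≤ C₀ then V₀ t else 0| ≤ C₀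
    split
    · assumption
    · simpa using hC
  have hVint : Integrable V := hWint.congr haeV
  -- transported sub/shift almost-everywhere equalities
  have haesub : ∀ a : ℝ, (fun t : ℝ => W (t - a)) =ᵐ[volume] fun t => V (t - a) := fun a =>
    (measurePreserving_sub_right volume a).quasiMeasurePreserving.ae_eq_comp haeV
  have haeshift : ∀ a : ℝ, (fun t : ℝ => W (t + a)) =ᵐ[volume] fun t => V (t + a) := fun a =>
    (measurePreserving_add_right volume a).quasiMeasurePreserving.ae_eq_comp haeV
  have haeshiftsub : ∀ a : ℝ,
      (fun t : ℝ => W (t + τ - a)) =ᵐ[volume] fun t => V (t + τ - a) := fun a =>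
    ((measurePreserving_sub_right volume a).comp
      (measurePreserving_add_right volume τ)).quasiMeasurePreserving.ae_eq_comp haeV
  -- `w` in terms of `V`
  have hwV : ∀ t : ℝ, w t = (1 / T) * ∫ u in (0 : ℝ)..T, V (t - u) := by
    intro t
    rw [hw t]
    congr 1
    rw [intervalIntegral.integral_comp_sub_left (fun s => W s) t,
      intervalIntegral.integral_comp_sub_left (fun s => V s) t]
    exact intervalIntegral.integral_congr_ae
      (by filter_upwards [haeV] with x hx _ using hx)
  have hAeq : (∫ t : ℝ, W t * W (t + τ)) = ∫ t : ℝ, V t * V (t + τ) :=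
    integral_congr_ae (haeV.mul (haeshift τ))
  have hLHS : ∀ ω, (∫ t : ℝ, (∑ i ∈ Finset.range (N ω), W (t - U i ω)) *
      (∑ j ∈ Finset.range (N ω), W (t + τ - U j ω)))
      = ∫ t : ℝ, (∑ i ∈ Finset.range (N ω), V (t - U i ω)) *
      (∑ j ∈ Finset.range (N ω), V (t + τ - U j ω)) := by
    intro ω
    refine integral_congr_ae ?_
    have h1 : ∀ᵐ t : ℝ, ∀ i : ℕ, W (t - U i ω) = V (t - U i ω) :=
      (MeasureTheory.ae_all_iff).mpr fun i => haesub (U i ω)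
    have h2 : ∀ᵐ t : ℝ, ∀ j : ℕ, W (t + τ - U j ω) = V (t + τ - U j ω) :=
      (MeasureTheory.ae_all_iff).mpr fun j => haeshiftsub (U j ω)
    filter_upwards [h1, h2] with t ht1 ht2
    rw [Finset.sum_congr rfl fun i _ => ht1 i, Finset.sum_congr rfl fun j _ => ht2 j]
  simp only [hLHS]
  rw [hAeq]
  exact FenrirAux.aux P lam T hlam hT N hN hNdist U hUmeas hUdist hUindep hNU
    V hVmeas hVint C₀ hC hVbdd w hwV τ
end
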